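/- Fix N ≥ 1. Let H⁺_d : ℝ^N × ℝ^N → ℝ be differentiable, F⁻_d, F⁺_d : ℝ^N × ℝ^N → ℝ^N arbitrary maps, and let ξ_Q : ℝ^N → ℝ^N and ξᵖ : ℝ^N × ℝ^N → ℝ^N be given. Assume infinitesimal invariance of the generalized discrete Lagrangian R_d(q, q', p') = p'·q' − H⁺_d(q, p'): for all q, q', p' ∈ ℝ^N, −D₁H⁺_d(q, p')·ξ_Q(q) + p'·ξ_Q(q') + ( q' − D₂H⁺_d(q, p') )·ξᵖ(q', p') = 0. Then whenever (q_k, p_k, q_{k+1}, p_{k+1}) satisfy the discrete equations q_{k+1} = D₂H⁺_d(q_k, p_{k+1}) − F⁺_d(q_k, p_{k+1}) and p_k = D₁H⁺_d(q_k, p_{k+1}) − F⁻_d(q_k, p_{k+1}), the momentum map changes according to p_{k+1}·ξ_Q(q_{k+1}) − p_k·ξ_Q(q_k) = F⁻_d(q_k, p_{k+1})·ξ_Q(q_k) + F⁺_d(q_k, p_{k+1})·ξᵖ(q_{k+1}, p_{k+1}). (The discrete evolution formula for the momentum map established in the proof of Theorem 3.3 and stated in the remark following it.) -/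

import Mathlib

/- STATEMENT 4: Discrete evolution formula for the momentum map (established in the
   proof of Theorem 3.3 and stated in the remark following it). -/

noncomputable section
open scoped BigOperators

abbrev E (N : ℕ) : Type := EuclideanSpace ℝ (Fin N)

/-- Gradient with respect to the first argument. -/
noncomputable def D1 {N : ℕ} (H : E N × E N → ℝ) (x y : E N) : E N :=
  gradient (fun x' => H (x', y)) x

/-- Gradient with respect to the second argument. -/
noncomputable def D2 {N : ℕ} (H : E N × E N → ℝ) (x y : E N) : E N :=
  gradient (fun y' => H (x, y')) y

theorem discrete_momentum_map_evolution
    {N : ℕ} (hN : 1 ≤ N)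
    (Hd : E N × E N → ℝ) (hHd : Differentiable ℝ Hd)
    (Fminus Fplus : E N × E N → E N)
    (ξQ : E N → E N) (ξP : E N × E N → E N)
    -- infinitesimal invariance of R_d(q, q', p') = p'·q' − H⁺_d(q, p'):
    (hinv : ∀ q q' p' : E N,
      -(inner ℝ (D1 Hd q p') (ξQ q) : ℝ) + (inner ℝ p' (ξQ q') : ℝ)
        + (inner ℝ (q' - D2 Hd q p') (ξP (q', p')) : ℝ) = 0)
    (qk pk qk1 pk1 : E N)
    (heq1 : qk1 = D2 Hd qk pk1 - Fplus (qk, pk1))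
    (heq2 : pk = D1 Hd qk pk1 - Fminus (qk, pk1)) :
    (inner ℝ pk1 (ξQ qk1) : ℝ) - (inner ℝ pk (ξQ qk) : ℝ)
      = (inner ℝ (Fminus (qk, pk1)) (ξQ qk) : ℝ)
        + (inner ℝ (Fplus (qk, pk1)) (ξP (qk1, pk1)) : ℝ) := by
  have h := hinv qk qk1 pk1
  have h1 : qk1 - D2 Hd qk pk1 = -Fplus (qk, pk1) := by
    rw [heq1]; abel
  rw [h1, inner_neg_left] at h
  have h2 : (inner ℝ pk (ξQ qk) : ℝ)
      = (inner ℝ (D1 Hd qk pk1) (ξQ qk) : ℝ) - (inner ℝ (Fminus (qk, pk1)) (ξQ qk) : ℝ) := by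
    rw [heq2, inner_sub_left]
  rw [h2]; linarith
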